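/- arXiv:0910.3540 — 3 statements merged into one kernel-verified Lean document; each statement's English description precedes it below -/
import Mathlib

section
/- Let g be a complex Lie algebra and n a Lie subalgebra such that the adjoint n-module g/n is locally finite over n. Then for any n-module M that is locally finite over n, the induced g-module U(g) ⊗_{U(n)} M is locally finite over n. -/
universe u

/-- Let `n` be a Lie subalgebra of `g` such that the adjoint `n`-module `g/n`
is locally finite over `n`.  If `M` is an `n`-module which is locally finite over `n`, then the
induced `g`-module `U(g) ⊗_{U(n)} M` — characterized here, together with the canonical
`n`-equivariant map `η : M → U(g) ⊗_{U(n)} M`, by its universal property — is locally finite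
over `n`.  (A module is locally finite over `n` iff every vector lies in a finite-dimensional
`n`-invariant subspace, i.e. `U(n)·v` is finite dimensional for every `v`.) -/
theorem locallyFinite_induced
    {g : Type u} [LieRing g] [LieAlgebra ℂ g] (n : LieSubalgebra ℂ g)
    (hgn : ∀ y : g, ∃ W : Submodule ℂ (g ⧸ n.toSubmodule), FiniteDimensional ℂ W ∧
      Submodule.Quotient.mk y ∈ W ∧
      ∀ (x : n) (z : g), Submodule.Quotient.mk z ∈ W →
        (Submodule.Quotient.mk ⁅(x : g), z⁆ : g ⧸ n.toSubmodule) ∈ W)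
    (M : Type u) [AddCommGroup M] [Module ℂ M] [LieRingModule n M] [LieModule ℂ n M]
    (hM : ∀ v : M, ∃ W : Submodule ℂ M, v ∈ W ∧ FiniteDimensional ℂ W ∧
      ∀ (x : n), ∀ w ∈ W, ⁅x, w⁆ ∈ W)
    -- `(P, η)` is the induced module `U(g) ⊗_{U(n)} M` with its canonical map `η(m) = 1 ⊗ m`:
    (P : Type u) [AddCommGroup P] [Module ℂ P] [LieRingModule g P] [LieModule ℂ g P]
    (η : M →ₗ[ℂ] P) (hη : ∀ (x : n) (m : M), η ⁅x, m⁆ = ⁅(x : g), η m⁆)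
    (huniv : ∀ (Q : Type u) [AddCommGroup Q] [Module ℂ Q] [LieRingModule g Q] [LieModule ℂ g Q]
      (ψ : M →ₗ[ℂ] Q), (∀ (x : n) (m : M), ψ ⁅x, m⁆ = ⁅(x : g), ψ m⁆) →
      ∃! Φ : P →ₗ⁅ℂ,g⁆ Q, ∀ m : M, Φ (η m) = ψ m) :
    ∀ v : P, ∃ W : Submodule ℂ P, v ∈ W ∧ FiniteDimensional ℂ W ∧
      ∀ (x : n), ∀ w ∈ W, ⁅(x : g), w⁆ ∈ W := by
  classical
  -- the bracket as a bilinear map g →ₗ P →ₗ P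
  set f : g →ₗ[ℂ] P →ₗ[ℂ] P := LinearMap.mk₂ ℂ (fun (a : g) (w : P) => ⁅a, w⁆) (fun _ _ _ => add_lie _ _ _) (fun c a w => smul_lie c a w) (fun _ _ _ => lie_add _ _ _) (fun c a w => lie_smul c a w) with hfdef
  have hfapp : ∀ (a : g) (w : P), f a w = ⁅a, w⁆ := fun a w => rfl
  -- the set of locally finite vectors
  set Sc : Set P := {v | ∃ W : Submodule ℂ P, v ∈ W ∧ FiniteDimensional ℂ W ∧
      ∀ (x : n), ∀ w ∈ W, ⁅(x : g), w⁆ ∈ W} with hScdef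
  have hzero : (0 : P) ∈ Sc := by
    refine ⟨⊥, Submodule.zero_mem _, inferInstance, ?_⟩
    intro x w hw
    rw [Submodule.mem_bot] at hw
    simp [hw]
  have hadd : ∀ v₁ v₂ : P, v₁ ∈ Sc → v₂ ∈ Sc → v₁ + v₂ ∈ Sc := by
    rintro v₁ v₂ ⟨W₁, h₁, hfd₁, hinv₁⟩ ⟨W₂, h₂, hfd₂, hinv₂⟩
    refine ⟨W₁ ⊔ W₂, Submodule.add_mem_sup h₁ h₂, inferInstance, ?_⟩
    intro x w hw
    obtain ⟨a, ha, b, hb, rfl⟩ := Submodule.mem_sup.mp hw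
    rw [lie_add]
    exact Submodule.add_mem_sup (hinv₁ x a ha) (hinv₂ x b hb)
  have hsmul : ∀ (c : ℂ) (v : P), v ∈ Sc → c • v ∈ Sc := by
    rintro c v ⟨W, hv, hfd, hinv⟩
    exact ⟨W, W.smul_mem c hv, hfd, hinv⟩
  have hlie : ∀ (y : g) (v : P), v ∈ Sc → ⁅y, v⁆ ∈ Sc := by
    rintro y v ⟨W, hvW, hWfd, hWinv⟩
    obtain ⟨W', hW'fd, hyW', hW'inv⟩ := hgn y
    -- pick a finite-dimensional subspace `V ≤ g` mapping onto `W'`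
    obtain ⟨t, ht⟩ := (Submodule.fg_iff_finiteDimensional W').mpr hW'fd
    set π := n.toSubmodule.mkQ with hπdef
    have hπsurj : Function.Surjective π := Submodule.mkQ_surjective _
    set pick : (g ⧸ n.toSubmodule) → g := Function.surjInv hπsurj with hpickdef
    have hpick : ∀ q, π (pick q) = q := fun q => Function.surjInv_eq hπsurj q
    set V : Submodule ℂ g := Submodule.span ℂ (pick '' ↑t) with hVdef
    have hVfd : FiniteDimensional ℂ V :=
      FiniteDimensional.span_of_finite ℂ ((t.finite_toSet).image _)
    have hVmap : Submodule.map π V = W' := by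
      rw [hVdef, Submodule.map_span, ← Set.image_comp]
      have himg : (⇑π ∘ pick) '' ↑t = ↑t := by
        ext q
        constructor
        · rintro ⟨q', hq', rfl⟩
          simpa [Function.comp, hpick] using hq'
        · intro hq
          exact ⟨q, hq, hpick q⟩
      rw [himg, ht]
    -- from membership of a class in W' we extract a decomposition
    have hdec : ∀ z : g, (Submodule.Quotient.mk z : g ⧸ n.toSubmodule) ∈ W' →
        ∃ a ∈ V, z - a ∈ n := by
      intro z hz
      rw [← hVmap] at hz
      obtain ⟨a, haV, ha⟩ := hz
      refine ⟨a, haV, ?_⟩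
      have : (Submodule.Quotient.mk a : g ⧸ n.toSubmodule) = Submodule.Quotient.mk z := ha
      have h2 : z - a ∈ n.toSubmodule := by
        rw [← neg_sub]
        exact Submodule.neg_mem _ ((Submodule.Quotient.eq _).mp this)
      exact h2
    -- the candidate subspace
    set U : Submodule ℂ P := W ⊔ Submodule.map₂ f V W with hUdef
    have hUfd : FiniteDimensional ℂ U := by
      obtain ⟨s, hs⟩ := (Submodule.fg_iff_finiteDimensional W).mpr hWfd
      obtain ⟨r, hr⟩ := (Submodule.fg_iff_finiteDimensional V).mpr hVfd
      have : Submodule.map₂ f V W = Submodule.span ℂ (Set.image2 (fun a w => f a w) ↑r ↑s) := by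
        rw [← hr, ← hs, Submodule.map₂_span_span]
      have hfd2 : FiniteDimensional ℂ (Submodule.map₂ f V W) := by
        rw [this]
        exact FiniteDimensional.span_of_finite ℂ
          (Set.Finite.image2 _ r.finite_toSet s.finite_toSet)
      exact Submodule.finiteDimensional_sup W _
    -- invariance of U under n
    have hUinv : ∀ (x : n), ∀ w ∈ U, ⁅(x : g), w⁆ ∈ U := by
      intro x w hw
      obtain ⟨w₁, hw₁, w₂, hw₂, rfl⟩ := Submodule.mem_sup.mp hw
      rw [lie_add]
      refine Submodule.add_mem _ (Submodule.mem_sup_left (hWinv x w₁ hw₁)) ?_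
      -- show the bracket maps map₂ f V W into U
      have key : Submodule.map (f (x : g)) (Submodule.map₂ f V W) ≤ U := by
        rw [Submodule.map_le_iff_le_comap]
        refine Submodule.map₂_le.mpr ?_
        intro a haV p hpW
        simp only [Submodule.mem_comap]
        rw [hfapp, hfapp]
        have hmka : (Submodule.Quotient.mk a : g ⧸ n.toSubmodule) ∈ W' := by
          rw [← hVmap]; exact Submodule.mem_map_of_mem haV
        have hmk : (Submodule.Quotient.mk ⁅(x : g), a⁆ : g ⧸ n.toSubmodule) ∈ W' :=
          hW'inv x a hmka
        obtain ⟨a', ha'V, hz⟩ := hdec _ hmk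
        have hsplit : ⁅(x : g), ⁅a, p⁆⁆ = (⁅a', p⁆ + ⁅((⟨⁅(x : g), a⁆ - a', hz⟩ : n) : g), p⁆)
            + ⁅a, ⁅(x : g), p⁆⁆ := by
          rw [leibniz_lie]
          congr 1
          show ⁅⁅(x : g), a⁆, p⁆ = ⁅a', p⁆ + ⁅⁅(x : g), a⁆ - a', p⁆
          rw [sub_lie]
          abel
        rw [hsplit]
        refine Submodule.add_mem _ (Submodule.add_mem _ ?_ ?_) ?_
        · exact Submodule.mem_sup_right (Submodule.apply_mem_map₂ f ha'V hpW)
        · exact Submodule.mem_sup_left (hWinv _ p hpW)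
        · exact Submodule.mem_sup_right (Submodule.apply_mem_map₂ f haV (hWinv x p hpW))
      have : ⁅(x : g), w₂⁆ = f (x : g) w₂ := rfl
      rw [this]
      exact key (Submodule.mem_map_of_mem hw₂)
    -- membership of ⁅y, v⁆
    obtain ⟨a, haV, hz⟩ := hdec y hyW'
    have hyv : ⁅y, v⁆ = ⁅a, v⁆ + ⁅((⟨y - a, hz⟩ : n) : g), v⁆ := by
      show ⁅y, v⁆ = ⁅a, v⁆ + ⁅y - a, v⁆
      rw [sub_lie]
      abel
    refine ⟨U, ?_, hUfd, hUinv⟩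
    rw [hyv]
    refine Submodule.add_mem _ ?_ (Submodule.mem_sup_left (hWinv _ v hvW))
    exact Submodule.mem_sup_right (Submodule.apply_mem_map₂ f haV hvW)
  -- assemble the Lie submodule of locally finite vectors
  let S : LieSubmodule ℂ g P :=
    { carrier := Sc
      add_mem' := fun {a b} ha hb => hadd a b ha hb
      zero_mem' := hzero
      smul_mem' := fun c {v} hv => hsmul c v hv
      lie_mem := fun {y v} hv => hlie y v hv }
  -- η lands in S
  have hmem : ∀ m : M, η m ∈ S := by
    intro m
    obtain ⟨W, hmW, hWfd, hWinv⟩ := hM m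
    refine ⟨Submodule.map η W, Submodule.mem_map_of_mem hmW, Module.Finite.map W η, ?_⟩
    intro x w hw
    obtain ⟨w', hw', rfl⟩ := hw
    rw [← hη]
    exact Submodule.mem_map_of_mem (hWinv x w' hw')
  -- the corestriction of η to S
  let ψ : M →ₗ[ℂ] S :=
    { toFun := fun m => ⟨η m, hmem m⟩
      map_add' := fun a b => by ext; simp
      map_smul' := fun c a => by ext; simp }
  have hψ : ∀ (x : n) (m : M), ψ ⁅x, m⁆ = ⁅(x : g), ψ m⁆ := by
    intro x m
    ext
    rw [LieSubmodule.coe_bracket]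
    exact hη x m
  obtain ⟨Φ, hΦ, -⟩ := huniv S ψ hψ
  obtain ⟨Φ₀, hΦ₀, huniq⟩ := huniv P η hη
  have h1 : S.incl.comp Φ = Φ₀ := by
    refine huniq _ ?_
    intro m
    simp only [LieModuleHom.comp_apply, hΦ]
    rfl
  have h2 : (LieModuleHom.id : P →ₗ⁅ℂ,g⁆ P) = Φ₀ := huniq _ (fun m => rfl)
  intro v
  have hv : ((Φ v : S) : P) = v := by
    have := congrArg (fun F : P →ₗ⁅ℂ,g⁆ P => F v) (h1.trans h2.symm)
    simpa using this
  have : v ∈ S := hv ▸ (Φ v).2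
  exact this
end

section
/- Let (g, n) be a Whittaker pair and M a g-module locally finite over n. If M is generated by a Whittaker vector v of type λ, and v is (up to scalar) the unique nonzero Whittaker vector in M, then M is a simple g-module. -/
attribute [local instance 100] LieRing.ofAssociativeRing

namespace SUWG

variable {g : Type*} [LieRing g] [LieAlgebra ℂ g] (n : LieSubalgebra ℂ g) (lam : n →ₗ⁅ℂ⁆ ℂ)
variable {M : Type*} [AddCommGroup M] [Module ℂ M] [LieRingModule g M] [LieModule ℂ g M]

/-- The twisted action `ρ(x) - λ(x)`. -/
noncomputable def tau (x : n) : Module.End ℂ M :=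
  LieModule.toEnd ℂ g M (x : g) - lam x • 1

lemma tau_apply (x : n) (u : M) : tau n lam x u = ⁅(x : g), u⁆ - lam x • u := by
  simp [tau, LieModule.toEnd_apply_apply]

lemma lam_lie (x y : n) : lam ⁅x, y⁆ = 0 := by
  rw [LieHom.map_lie, Ring.lie_def, mul_comm, sub_self]

lemma tau_lie_bracket (x : n) (a : g) (u : M) :
    tau n lam x ⁅a, u⁆ = ⁅a, tau n lam x u⁆ + ⁅⁅(x : g), a⁆, u⁆ := by
  rw [tau_apply, tau_apply, leibniz_lie, lie_sub, lie_smul]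
  abel

lemma tau_mem {T : Submodule ℂ M} (hT : ∀ x : n, ∀ u ∈ T, ⁅(x : g), u⁆ ∈ T)
    (z : n) {u : M} (hu : u ∈ T) : tau n lam z u ∈ T := by
  rw [tau_apply]
  exact sub_mem (hT z u hu) (Submodule.smul_mem _ _ hu)

lemma tau_pow_mem {T : Submodule ℂ M} (hT : ∀ x : n, ∀ u ∈ T, ⁅(x : g), u⁆ ∈ T)
    (z : n) (j : ℕ) {u : M} (hu : u ∈ T) : ((tau n lam z) ^ j) u ∈ T := by
  induction j generalizing u with
  | zero => simpa using hu
  | succ j ih =>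
    rw [pow_succ, Module.End.mul_apply]
    exact ih (tau_mem n lam hT z hu)

/-- Key combinatorial lemma: if `(ad z)^k a ∈ n` and high powers of `τ_z` push `w` into `G`,
with `⁅g, G⁆ ⊆ T`, then high powers of `τ_z` keep `⁅a, w⁆` in `T`. -/
lemma key (z : n) (T G : Submodule ℂ M)
    (hT : ∀ x : n, ∀ u ∈ T, ⁅(x : g), u⁆ ∈ T)
    (hG : ∀ a : g, ∀ u ∈ G, ⁅a, u⁆ ∈ T) :
    ∀ (m k b : ℕ) (a : g) (w : M),
      ((LieAlgebra.ad ℂ g (z : g)) ^ k) a ∈ n.toSubmodule → w ∈ T →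
      (∀ m', b ≤ m' → ((tau n lam z) ^ m') w ∈ G) → k + b ≤ m →
      ((tau n lam z) ^ m) ⁅a, w⁆ ∈ T := by
  intro m
  induction m using Nat.strong_induction_on with
  | _ m IH =>
    intro k b a w hk hw hwb hm
    cases k with
    | zero =>
      rw [pow_zero, Module.End.one_apply] at hk
      exact tau_pow_mem n lam hT z m (hT ⟨a, hk⟩ w hw)
    | succ k' =>
      cases b with
      | zero =>
        have hwG : w ∈ G := by simpa using hwb 0 le_rfl
        exact tau_pow_mem n lam hT z m (hG a w hwG)
      | succ b' =>
        obtain ⟨m'', rfl⟩ : ∃ m'', m = m'' + 1 := ⟨m - 1, by omega⟩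
        rw [pow_succ, Module.End.mul_apply, tau_lie_bracket, map_add]
        refine add_mem ?_ ?_
        · refine IH m'' (by omega) (k' + 1) b' a (tau n lam z w) hk
            (tau_mem n lam hT z hw) (fun m' hm' => ?_) (by omega)
          have : ((tau n lam z) ^ m') (tau n lam z w) = ((tau n lam z) ^ (m' + 1)) w := by
            rw [pow_succ, Module.End.mul_apply]
          rw [this]
          exact hwb (m' + 1) (by omega)
        · refine IH m'' (by omega) k' (b' + 1) ⁅(z : g), a⁆ w ?_ hw hwb (by omega)
          rw [pow_succ, Module.End.mul_apply, LieAlgebra.ad_apply] at hk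
          exact hk

lemma isNilpotent_of_forall_pow {V : Type*} [AddCommGroup V] [Module ℂ V]
    [FiniteDimensional ℂ V] (f : Module.End ℂ V) (h : ∀ x : V, ∃ m, (f ^ m) x = 0) :
    IsNilpotent f := by
  obtain ⟨s, hs⟩ : ∃ s : Finset V, Submodule.span ℂ (s : Set V) = ⊤ := by
    obtain ⟨s, hs⟩ := Module.finite_def.mp (inferInstance : Module.Finite ℂ V)
    exact ⟨s, hs⟩
  choose mf hmf using h
  refine ⟨s.sup mf, ?_⟩
  have hker : ∀ x ∈ (s : Set V), x ∈ LinearMap.ker (f ^ s.sup mf) := by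
    intro x hx
    rw [LinearMap.mem_ker]
    have hle : mf x ≤ s.sup mf := Finset.le_sup (by simpa using hx)
    have : f ^ s.sup mf = f ^ (s.sup mf - mf x) * f ^ mf x := by
      rw [← pow_add]; congr 1; omega
    rw [this, Module.End.mul_apply, hmf x, map_zero]
  have : (⊤ : Submodule ℂ V) ≤ LinearMap.ker (f ^ s.sup mf) := by
    rw [← hs]; exact Submodule.span_le.mpr hker
  ext x
  simpa using LinearMap.mem_ker.mp (this (Submodule.mem_top))

lemma coe_add' (x y : n) : ((x + y : n) : g) = (x : g) + (y : g) := rfl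

lemma coe_smul' (c : ℂ) (x : n) : ((c • x : n) : g) = c • (x : g) := rfl

/-- Twisted Lie ring module structure on an invariant submodule. -/
noncomputable def tauRingModule (V : Submodule ℂ M)
    (hst : ∀ x : n, ∀ u ∈ V, tau n lam x u ∈ V) : LieRingModule n V where
  bracket x w := ⟨tau n lam x w.1, hst x w.1 w.2⟩
  add_lie x y w := by
    ext
    show tau n lam (x + y) w.1 = tau n lam x w.1 + tau n lam y w.1
    rw [tau_apply, tau_apply, tau_apply, coe_add', add_lie, map_add lam x y, add_smul]
    abel
  lie_add x w₁ w₂ := by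
    ext
    show tau n lam x (w₁.1 + w₂.1) = tau n lam x w₁.1 + tau n lam x w₂.1
    rw [map_add]
  leibniz_lie x y w := by
    ext
    show tau n lam x (tau n lam y w.1) = tau n lam ⁅x, y⁆ w.1 + tau n lam y (tau n lam x w.1)
    simp only [tau_apply, lam_lie, zero_smul, sub_zero, LieSubalgebra.coe_bracket, lie_sub,
      lie_smul, smul_sub, smul_smul]
    rw [leibniz_lie ((x : g)) ((y : g)) w.1, mul_comm]
    abel

noncomputable def tauModule (V : Submodule ℂ M)
    (hst : ∀ x : n, ∀ u ∈ V, tau n lam x u ∈ V) :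
    @LieModule ℂ n V _ _ _ _ _ (tauRingModule n lam V hst) := by
  letI := tauRingModule n lam V hst
  refine ⟨fun c x w => ?_, fun c x w => ?_⟩
  · ext
    show tau n lam (c • x) w.1 = c • tau n lam x w.1
    rw [tau_apply, tau_apply, coe_smul', smul_lie, map_smul lam c x, smul_eq_mul, smul_sub,
      smul_smul]
  · ext
    show tau n lam x (c • w.1) = c • tau n lam x w.1
    rw [map_smul]

end SUWG

open SUWG in
/-- Let `(g, n)` be a Whittaker pair and `M` a `g`-module locally finite
over `n`.  If `M` is generated by a Whittaker vector `v` of type `λ`, and `v` is (up to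
scalar) the unique nonzero Whittaker vector in `M`, then `M` is a simple `g`-module. -/
theorem simple_of_unique_whittaker_generator
    {g : Type*} [LieRing g] [LieAlgebra ℂ g] (n : LieSubalgebra ℂ g)
    (hqn : (⨅ i : ℕ, LieModule.lowerCentralSeries ℂ n n i) = ⊥)
    (hln : ∀ (x : n) (y : g), ∃ k : ℕ, ((LieAlgebra.ad ℂ g (x : g)) ^ k) y ∈ n.toSubmodule)
    (lam : n →ₗ⁅ℂ⁆ ℂ)
    (M : Type*) [AddCommGroup M] [Module ℂ M] [LieRingModule g M] [LieModule ℂ g M]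
    (hM : ∀ v : M, ∃ W : Submodule ℂ M, v ∈ W ∧ FiniteDimensional ℂ W ∧
      ∀ (x : n), ∀ w ∈ W, ⁅(x : g), w⁆ ∈ W)
    (v : M) (hv0 : v ≠ 0)
    (hvW : ∀ x : n, ⁅(x : g), v⁆ = lam x • v)
    (hgen : LieSubmodule.lieSpan ℂ g {v} = ⊤)
    (huniq : ∀ w : M, (∀ x : n, ⁅(x : g), w⁆ = lam x • w) → ∃ c : ℂ, w = c • v) :
    LieModule.IsIrreducible ℂ g M := by
  classical
  -- the filtration by number of applications of `g`
  let F : ℕ → Submodule ℂ M := fun s => Nat.rec (ℂ ∙ v)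
    (fun _ P => P ⊔ Submodule.span ℂ {m | ∃ (a : g) (u : M), u ∈ P ∧ m = ⁅a, u⁆}) s
  have hF0 : F 0 = ℂ ∙ v := rfl
  have hFs : ∀ s, F (s + 1) =
      F s ⊔ Submodule.span ℂ {m | ∃ (a : g) (u : M), u ∈ F s ∧ m = ⁅a, u⁆} := fun s => rfl
  have hmono : ∀ s, F s ≤ F (s + 1) := fun s => by rw [hFs]; exact le_sup_left
  have hbr : ∀ (s : ℕ) (a : g) (u : M), u ∈ F s → ⁅a, u⁆ ∈ F (s + 1) := by
    intro s a u hu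
    rw [hFs]
    exact Submodule.mem_sup_right (Submodule.subset_span ⟨a, u, hu, rfl⟩)
  -- `F s` is stable under `n`
  have hstab : ∀ (s : ℕ) (x : n), ∀ u ∈ F s, ⁅(x : g), u⁆ ∈ F s := by
    intro s
    induction s with
    | zero =>
      intro x u hu
      rw [hF0] at hu ⊢
      obtain ⟨c, rfl⟩ := Submodule.mem_span_singleton.mp hu
      rw [lie_smul, hvW x]
      exact Submodule.smul_mem _ _ (Submodule.smul_mem _ _ (Submodule.mem_span_singleton_self v))
    | succ s ih =>
      intro x u hu
      rw [hFs] at hu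
      have hsub : F s ⊔ Submodule.span ℂ {m | ∃ (a : g) (u : M), u ∈ F s ∧ m = ⁅a, u⁆} ≤
          Submodule.comap (LieModule.toEnd ℂ g M (x : g)) (F (s + 1)) := by
        refine sup_le (fun u hu => ?_) (Submodule.span_le.mpr ?_)
        · simp only [Submodule.mem_comap, LieModule.toEnd_apply_apply]
          exact hmono s (ih x u hu)
        · rintro _ ⟨a, u', hu', rfl⟩
          simp only [SetLike.mem_coe, Submodule.mem_comap, LieModule.toEnd_apply_apply]
          rw [leibniz_lie]
          exact add_mem (hbr s ⁅(x : g), a⁆ u' hu') (hbr s a _ (ih x u' hu'))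
      have := hsub hu
      simpa only [Submodule.mem_comap, LieModule.toEnd_apply_apply] using this
  -- base
  have hbase : ∀ (z : n), ∀ u ∈ F 0, ∀ m : ℕ, 1 ≤ m → ((tau n lam z) ^ m) u = 0 := by
    intro z u hu m hm
    rw [hF0] at hu
    obtain ⟨c, rfl⟩ := Submodule.mem_span_singleton.mp hu
    obtain ⟨m', rfl⟩ : ∃ m', m = m' + 1 := ⟨m - 1, by omega⟩
    rw [pow_succ, Module.End.mul_apply, map_smul, tau_apply, hvW z, sub_self, smul_zero, map_zero]
  -- each τ_z eventually pushes `F (s+1)` into `F s`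
  have hP : ∀ (z : n) (s : ℕ), ∀ u ∈ F (s + 1), ∃ b : ℕ, ∀ m, b ≤ m →
      ((tau n lam z) ^ m) u ∈ F s := by
    intro z s
    induction s with
    | zero =>
      intro u hu
      let P : Submodule ℂ M :=
        { carrier := {u | ∃ b : ℕ, ∀ m, b ≤ m → ((tau n lam z) ^ m) u ∈ F 0}
          zero_mem' := ⟨0, fun m _ => by simp⟩
          add_mem' := by
            rintro u₁ u₂ ⟨b₁, h₁⟩ ⟨b₂, h₂⟩
            exact ⟨max b₁ b₂, fun m hm => by
              rw [map_add]
              exact add_mem (h₁ m (le_trans (le_max_left _ _) hm))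
                (h₂ m (le_trans (le_max_right _ _) hm))⟩
          smul_mem' := by
            rintro c u ⟨b, h⟩
            exact ⟨b, fun m hm => by rw [map_smul]; exact Submodule.smul_mem _ _ (h m hm)⟩ }
      suffices hle : F (0 + 1) ≤ P from hle hu
      rw [hFs 0]
      refine sup_le (fun u hu => ⟨0, fun m _ => tau_pow_mem n lam (hstab 0) z m hu⟩)
        (Submodule.span_le.mpr ?_)
      rintro _ ⟨a, u', hu', rfl⟩
      obtain ⟨k, hk⟩ := hln z a
      refine ⟨k + 1, fun m hm => ?_⟩
      refine key n lam z (F 0) ⊥ (hstab 0) (fun a u hu => ?_) m k 1 a u' hk hu'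
        (fun m' hm' => ?_) hm
      · rw [Submodule.mem_bot] at hu; rw [hu, lie_zero]; exact Submodule.zero_mem _
      · rw [Submodule.mem_bot]
        exact hbase z u' hu' m' hm'
    | succ s' ih =>
      intro u hu
      let P : Submodule ℂ M :=
        { carrier := {u | ∃ b : ℕ, ∀ m, b ≤ m → ((tau n lam z) ^ m) u ∈ F (s' + 1)}
          zero_mem' := ⟨0, fun m _ => by simp⟩
          add_mem' := by
            rintro u₁ u₂ ⟨b₁, h₁⟩ ⟨b₂, h₂⟩
            exact ⟨max b₁ b₂, fun m hm => by
              rw [map_add]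
              exact add_mem (h₁ m (le_trans (le_max_left _ _) hm))
                (h₂ m (le_trans (le_max_right _ _) hm))⟩
          smul_mem' := by
            rintro c u ⟨b, h⟩
            exact ⟨b, fun m hm => by rw [map_smul]; exact Submodule.smul_mem _ _ (h m hm)⟩ }
      suffices hle : F (s' + 1 + 1) ≤ P from hle hu
      rw [hFs (s' + 1)]
      refine sup_le (fun u hu => ⟨0, fun m _ => tau_pow_mem n lam (hstab (s' + 1)) z m hu⟩)
        (Submodule.span_le.mpr ?_)
      rintro _ ⟨a, u', hu', rfl⟩
      obtain ⟨k, hk⟩ := hln z a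
      obtain ⟨b, hb⟩ := ih u' hu'
      exact ⟨k + b, fun m hm => key n lam z (F (s' + 1)) (F s') (hstab (s' + 1))
        (fun a u hu => hbr s' a u hu) m k b a u' hk hu' hb hm⟩
  -- local nilpotency of each τ_z on each F s
  have hnil : ∀ (z : n) (s : ℕ), ∀ u ∈ F s, ∃ m : ℕ, ((tau n lam z) ^ m) u = 0 := by
    intro z s
    induction s with
    | zero => exact fun u hu => ⟨1, hbase z u hu 1 le_rfl⟩
    | succ s ih =>
      intro u hu
      obtain ⟨b, hb⟩ := hP z s u hu
      obtain ⟨m', hm'⟩ := ih _ (hb b le_rfl)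
      refine ⟨m' + b, ?_⟩
      rw [pow_add, Module.End.mul_apply]
      exact hm'
  -- the filtration covers M
  have hdir : Directed (· ≤ ·) F := fun i j =>
    ⟨max i j, monotone_nat_of_le_succ hmono (le_max_left i j),
      monotone_nat_of_le_succ hmono (le_max_right i j)⟩
  have hcover : ∀ u : M, ∃ s, u ∈ F s := by
    let N₀ : LieSubmodule ℂ g M :=
      { toSubmodule := ⨆ s, F s
        lie_mem := by
          intro a m hm
          have hm' : m ∈ (⨆ s, F s : Submodule ℂ M) := hm
          rw [Submodule.mem_iSup_of_directed F hdir] at hm'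
          obtain ⟨s, hs⟩ := hm'
          show ⁅a, m⁆ ∈ (⨆ s, F s : Submodule ℂ M)
          rw [Submodule.mem_iSup_of_directed F hdir]
          exact ⟨s + 1, hbr s a m hs⟩ }
    have htop : (⊤ : LieSubmodule ℂ g M) ≤ N₀ := by
      rw [← hgen]
      apply LieSubmodule.lieSpan_le.mpr
      intro x hx
      rw [Set.mem_singleton_iff] at hx
      rw [hx]
      show v ∈ (⨆ s, F s : Submodule ℂ M)
      rw [Submodule.mem_iSup_of_directed F hdir]
      exact ⟨0, by rw [hF0]; exact Submodule.mem_span_singleton_self v⟩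
    intro u
    have hu : u ∈ (⨆ s, F s : Submodule ℂ M) := htop (LieSubmodule.mem_top u)
    exact (Submodule.mem_iSup_of_directed F hdir).mp hu
  have hlocnil : ∀ (z : n) (u : M), ∃ m : ℕ, ((tau n lam z) ^ m) u = 0 := by
    intro z u
    obtain ⟨s, hs⟩ := hcover u
    exact hnil z s u hs
  -- simplicity
  haveI : Nontrivial (LieSubmodule ℂ g M) := by
    refine ⟨⊥, ⊤, fun h => hv0 ?_⟩
    have : v ∈ (⊥ : LieSubmodule ℂ g M) := h ▸ LieSubmodule.mem_top v
    simpa using this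
  constructor
  intro N
  rcases eq_or_ne N ⊥ with h | h
  · left; exact h
  right
  obtain ⟨w, hwN, hw0⟩ : ∃ w ∈ N, w ≠ 0 := by
    by_contra hc
    push_neg at hc
    exact h (LieSubmodule.eq_bot_iff N |>.mpr fun m hm => hc m hm)
  obtain ⟨W, hwW, hWfd, hWst⟩ := hM w
  let V : Submodule ℂ M := W ⊓ (N : Submodule ℂ M)
  have hwV : w ∈ V := ⟨hwW, hwN⟩
  haveI : FiniteDimensional ℂ V := Submodule.finiteDimensional_of_le inf_le_left
  have hVst : ∀ x : n, ∀ u ∈ V, tau n lam x u ∈ V := by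
    intro x u hu
    rw [tau_apply]
    exact ⟨sub_mem (hWst x u hu.1) (Submodule.smul_mem _ _ hu.1),
      sub_mem (N.lie_mem hu.2) (Submodule.smul_mem _ _ hu.2)⟩
  letI : LieRingModule n V := tauRingModule n lam V hVst
  letI : LieModule ℂ n V := tauModule n lam V hVst
  haveI : Nontrivial V := ⟨⟨⟨w, hwV⟩, 0, fun hc => hw0 (by simpa using congrArg Subtype.val hc)⟩⟩
  haveI : IsNoetherian ℂ V := IsNoetherian.iff_fg.mpr inferInstance
  have hbr_val : ∀ (x : n) (u : V), (⁅x, u⁆ : V).1 = tau n lam x u.1 := fun x u => rfl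
  have hpow_val : ∀ (x : n) (j : ℕ) (u : V),
      (((LieModule.toEnd ℂ n V x) ^ j) u).1 = ((tau n lam x) ^ j) u.1 := by
    intro x j
    induction j with
    | zero => intro u; simp
    | succ j ih =>
      intro u
      rw [pow_succ, Module.End.mul_apply, ih, pow_succ, Module.End.mul_apply]
      rfl
  have hforall : ∀ x : n, IsNilpotent (LieModule.toEnd ℂ n V x) := by
    intro x
    apply isNilpotent_of_forall_pow
    intro u
    obtain ⟨m, hm⟩ := hlocnil x u.1
    exact ⟨m, Subtype.ext (by rw [hpow_val x m u, hm]; rfl)⟩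
  haveI : LieModule.IsNilpotent n V :=
    (LieModule.isNilpotent_iff_forall' (R := ℂ) (L := n) (M := V)).mpr hforall
  haveI : Nontrivial (LieModule.maxTrivSubmodule ℂ n V) :=
    LieModule.nontrivial_max_triv_of_isNilpotent ℂ n V
  obtain ⟨u₀, hu₀⟩ := exists_ne (0 : LieModule.maxTrivSubmodule ℂ n V)
  have hmem := (LieModule.mem_maxTrivSubmodule ℂ n V u₀.1).mp u₀.2
  set m₀ : M := (u₀.1 : M) with hm₀def
  have hm₀0 : m₀ ≠ 0 := by
    intro hc
    exact hu₀ (Subtype.ext (Subtype.ext hc))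
  have hwhit : ∀ x : n, ⁅(x : g), m₀⁆ = lam x • m₀ := by
    intro x
    have := congrArg Subtype.val (hmem x)
    rw [hbr_val] at this
    rw [tau_apply] at this
    simp only [ZeroMemClass.coe_zero] at this
    rw [sub_eq_zero] at this
    exact this
  obtain ⟨c, hc⟩ := huniq m₀ hwhit
  have hc0 : c ≠ 0 := fun hcc => hm₀0 (by rw [hc, hcc, zero_smul])
  have hm₀N : m₀ ∈ N := u₀.1.2.2
  have hvN : v ∈ N := by
    have hv_eq : v = c⁻¹ • m₀ := by
      rw [hc, smul_smul, inv_mul_cancel₀ hc0, one_smul]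
    rw [hv_eq]
    exact N.smul_mem _ hm₀N
  rw [eq_top_iff, ← hgen]
  apply LieSubmodule.lieSpan_le.mpr
  intro x hx
  rw [Set.mem_singleton_iff] at hx
  rw [hx]
  exact hvN
end

section
/- Let g be the two-dimensional complex Lie algebra with basis {a, b} and bracket [a,b] = b, and let λ ∈ ℂ with λ ≠ 0. Then the g-module M_λ = U(g)/U(g)(b − λ) is simple. -/
noncomputable section

open Polynomial UniversalEnvelopingAlgebra

private lemma whit_aux_comp_ne (f : ℂ[X]) (hf : f.natDegree ≠ 0) : f - f.comp (X - C 1) ≠ 0 := by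
  intro h
  have hcomp : f.comp (X - C 1) = f := by linear_combination -h
  have heval : ∀ z : ℂ, f.eval (z - 1) = f.eval z := by
    intro z
    conv_rhs => rw [← hcomp]
    simp [eval_comp]
  have hnat : ∀ n : ℕ, f.eval (n : ℂ) = f.eval 0 := by
    intro n
    induction n with
    | zero => simp
    | succ k ih =>
      push_cast
      rw [← ih, ← heval ((k : ℂ) + 1), add_sub_cancel_right]
  have hroot : (f - C (f.eval 0)) = 0 := by
    apply Polynomial.eq_zero_of_infinite_isRoot
    apply Set.infinite_of_injective_forall_mem (f := fun n : ℕ => (n : ℂ)) Nat.cast_injective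
    intro n
    simp [IsRoot, hnat n]
  have : f = C (f.eval 0) := by linear_combination hroot
  rw [this] at hf
  simp at hf

private lemma whit_aux_deg_lt (f : ℂ[X]) (hf : f.natDegree ≠ 0) :
    (f - f.comp (X - C 1)).natDegree < f.natDegree := by
  have hf0 : f ≠ 0 := fun h => hf (by simp [h])
  have hq : (X - C (1:ℂ)).natDegree = 1 := natDegree_X_sub_C 1
  have hlc : f.leadingCoeff = (f.comp (X - C 1)).leadingCoeff := by
    rw [leadingCoeff_comp (by rw [hq]; norm_num)]
    have : (X - C (1:ℂ)).leadingCoeff = 1 := (monic_X_sub_C 1)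
    rw [this, one_pow, mul_one]
  have hc0 : f.comp (X - C 1) ≠ 0 := by
    intro h
    apply hf0
    rw [← leadingCoeff_eq_zero, hlc, h, leadingCoeff_zero]
  have hdeg : (f.comp (X - C 1)).degree = f.degree := by
    rw [degree_eq_natDegree hc0, degree_eq_natDegree hf0, natDegree_comp, hq, mul_one]
  exact natDegree_lt_natDegree (whit_aux_comp_ne f hf) (degree_sub_lt hdeg.symm hf0 hlc)

private theorem whit_ue_induction {R L : Type*} [CommRing R] [LieRing L] [LieAlgebra R L]
    {C : UniversalEnvelopingAlgebra R L → Prop}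
    (halg : ∀ r, C (algebraMap R (UniversalEnvelopingAlgebra R L) r))
    (hι : ∀ x, C (UniversalEnvelopingAlgebra.ι R x))
    (hmul : ∀ u v, C u → C v → C (u * v))
    (hadd : ∀ u v, C u → C v → C (u + v)) (u : UniversalEnvelopingAlgebra R L) : C u := by
  have hsurj : Function.Surjective (mkAlgHom R L) :=
    RingCon.mkₐ_surjective (α := R) (UniversalEnvelopingAlgebra.ringCon R L)
  obtain ⟨t, rfl⟩ := hsurj u
  induction t using TensorAlgebra.induction with
  | algebraMap r => rw [AlgHom.commutes]; exact halg r
  | ι x => exact hι x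
  | mul u v hu hv => rw [map_mul]; exact hmul _ _ hu hv
  | add u v hu hv => rw [map_add]; exact hadd _ _ hu hv

section

attribute [local instance 100] LieRing.ofAssociativeRing

variable {g : Type*} [LieRing g] [LieAlgebra ℂ g] (a b : g)

private theorem whit_ba_comm (hab : ⁅a, b⁆ = b) :
    ι ℂ b * ι ℂ a = (ι ℂ a - 1) * ι ℂ b := by
  have h := (ι ℂ (L := g)).map_lie a b
  rw [hab, Ring.lie_def] at h
  rw [sub_mul, one_mul, eq_sub_iff_add_eq]
  exact (add_comm _ _).trans (sub_eq_iff_eq_add.mp h.symm).symm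

private theorem whit_b_pow_comm (hab : ⁅a, b⁆ = b) (n : ℕ) :
    ι ℂ b * (ι ℂ a) ^ n = (ι ℂ a - 1) ^ n * ι ℂ b := by
  induction n with
  | zero => simp
  | succ k ih =>
    rw [pow_succ, ← mul_assoc, ih, mul_assoc, whit_ba_comm a b hab]
    noncomm_ring

private theorem whit_b_poly_comm (hab : ⁅a, b⁆ = b) (p : ℂ[X]) :
    ι ℂ b * aeval (ι ℂ a) p = aeval (ι ℂ a) (p.comp (X - C 1)) * ι ℂ b := by
  induction p using Polynomial.induction_on' with
  | add p q hp hq => rw [add_comp, map_add, map_add, mul_add, add_mul, hp, hq]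
  | monomial n c =>
    have hXC : aeval (ι ℂ a) (X - C 1 : ℂ[X]) = ι ℂ a - 1 := by simp
    rw [monomial_comp, aeval_monomial, map_mul, aeval_C, map_pow, hXC,
      ← mul_assoc, ← Algebra.commutes c (ι ℂ b), mul_assoc, whit_b_pow_comm a b hab,
      ← mul_assoc]

private theorem whit_exists_lieHom {A' : Type*} [LieRing A'] [LieAlgebra ℂ A']
    (hli : LinearIndependent ℂ ![a, b]) (hspan : Submodule.span ℂ {a, b} = ⊤)
    (hab : ⁅a, b⁆ = b) (A B : A') (hAB : ⁅A, B⁆ = B) :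
    ∃ φ : g →ₗ⁅ℂ⁆ A', φ a = A ∧ φ b = B := by
  have hsp : ⊤ ≤ Submodule.span ℂ (Set.range ![a, b]) := by
    rw [show Set.range ![a, b] = {a, b} by
      ext x
      simp [Matrix.range_cons, Matrix.range_empty, or_comm]]
    exact hspan.ge
  set K : Module.Basis (Fin 2) ℂ g := Module.Basis.mk hli hsp with hK
  let F : g →ₗ[ℂ] A' := K.constr ℂ ![A, B]
  have hFa : F a = A := by
    have : K 0 = a := by rw [hK, Module.Basis.mk_apply]; rfl
    rw [← this]
    exact K.constr_basis ℂ ![A, B] 0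
  have hFb : F b = B := by
    have : K 1 = b := by rw [hK, Module.Basis.mk_apply]; rfl
    rw [← this]
    exact K.constr_basis ℂ ![A, B] 1
  have hmem : ∀ x : g, ∃ c d : ℂ, c • a + d • b = x := by
    intro x
    exact Submodule.mem_span_pair.mp (hspan ▸ Submodule.mem_top)
  have hba : ⁅b, a⁆ = -b := by rw [← lie_skew, hab]
  have hBA : ⁅B, A⁆ = -B := by rw [← lie_skew, hAB]
  refine ⟨{ toLinearMap := F, map_lie' := ?_ }, hFa, hFb⟩
  intro x y
  obtain ⟨c, d, rfl⟩ := hmem x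
  obtain ⟨e, f, rfl⟩ := hmem y
  simp only [LinearMap.toFun_eq_coe]
  simp only [map_add, map_smul, map_neg]
  simp only [add_lie, lie_add, smul_lie, lie_smul, lie_self, hab, hba, hAB, hBA,
    hFa, hFb, smul_zero, zero_add, add_zero, smul_neg, neg_smul, map_add, map_smul, map_neg]

end

/-- Let `g` be the two-dimensional complex Lie algebra with basis `{a, b}`
and bracket `[a,b] = b`, and let `λ ∈ ℂ`, `λ ≠ 0`.  Then the standard Whittaker module
`M_λ = U(g)/U(g)(b − λ)` is simple. -/
theorem standard_whittaker_module_simple_sl2_borel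
    {g : Type*} [LieRing g] [LieAlgebra ℂ g] (a b : g)
    (hli : LinearIndependent ℂ ![a, b]) (hspan : Submodule.span ℂ {a, b} = ⊤)
    (hab : ⁅a, b⁆ = b) (lam : ℂ) (hlam : lam ≠ 0) :
    IsSimpleModule (UniversalEnvelopingAlgebra ℂ g)
      (UniversalEnvelopingAlgebra ℂ g ⧸
        (Ideal.span {UniversalEnvelopingAlgebra.ι ℂ b -
          algebraMap ℂ (UniversalEnvelopingAlgebra ℂ g) lam} :
          Ideal (UniversalEnvelopingAlgebra ℂ g))) := by
  classical
  letI : LieRing (Module.End ℂ ℂ[X]) := LieRing.ofAssociativeRing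
  set U := UniversalEnvelopingAlgebra ℂ g with hU
  -- the two operators on ℂ[X]
  let Aop : Module.End ℂ ℂ[X] := Algebra.lmul ℂ ℂ[X] X
  let Bop : Module.End ℂ ℂ[X] := lam • (aeval (X - C 1 : ℂ[X])).toLinearMap
  have hAopapp : ∀ f : ℂ[X], Aop f = X * f := fun f => rfl
  have hBopapp : ∀ f : ℂ[X], Bop f = lam • f.comp (X - C 1) := fun f => rfl
  have hABop : ⁅Aop, Bop⁆ = Bop := by
    apply LinearMap.ext
    intro f
    simp only [Ring.lie_def, LinearMap.sub_apply, Module.End.mul_apply, hAopapp, hBopapp,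
      mul_comp, X_comp, Polynomial.smul_eq_C_mul, C_1]
    ring
  obtain ⟨φ, hφa, hφb⟩ := whit_exists_lieHom a b hli hspan hab Aop Bop hABop
  let ρ : U →ₐ[ℂ] Module.End ℂ ℂ[X] := lift ℂ φ
  have hρa : ρ (ι ℂ a) = Aop := by
    show lift ℂ φ (ι ℂ a) = Aop
    rw [lift_ι_apply, hφa]
  have hρb : ρ (ι ℂ b) = Bop := by
    show lift ℂ φ (ι ℂ b) = Bop
    rw [lift_ι_apply, hφb]
  letI instP : Module U ℂ[X] := Module.compHom _ ρ.toRingHom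
  have hsmul : ∀ (u : U) (f : ℂ[X]), u • f = ρ u f := fun _ _ => rfl
  have hCsmul : ∀ (c : ℂ) (f : ℂ[X]), (algebraMap ℂ U c) • f = c • f := by
    intro c f
    rw [hsmul, AlgHom.commutes, Module.algebraMap_end_apply]
  have haact : ∀ (p f : ℂ[X]), (aeval (ι ℂ a) p : U) • f = p * f := by
    intro p f
    rw [hsmul]
    have h1 : ρ (aeval (ι ℂ a) p) = aeval Aop p := by
      rw [← Polynomial.aeval_algHom_apply ρ (ι ℂ a) p, hρa]
    have h2 : aeval Aop p = Algebra.lmul ℂ ℂ[X] p := by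
      have h3 := Polynomial.aeval_algHom_apply (Algebra.lmul ℂ ℂ[X]) X p
      rwa [Polynomial.aeval_X_left_apply] at h3
    rw [h1, h2]
    rfl
  have hbact : ∀ f : ℂ[X], (ι ℂ b : U) • f = lam • f.comp (X - C 1) := by
    intro f
    rw [hsmul, hρb, hBopapp]
  -- ℂ[X] is a simple U-module
  haveI : Nontrivial (Submodule U ℂ[X]) := by
    refine ⟨⊥, ⊤, fun h => ?_⟩
    have h1 : (1 : ℂ[X]) ∈ (⊥ : Submodule U ℂ[X]) := h ▸ Submodule.mem_top
    rw [Submodule.mem_bot] at h1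
    exact one_ne_zero h1
  haveI hsimpleP : IsSimpleModule U ℂ[X] := by
    refine (isSimpleModule_iff _ _).mpr ⟨?_⟩
    intro W
    rcases eq_or_ne W ⊥ with h | h
    · exact Or.inl h
    refine Or.inr ?_
    obtain ⟨f0, hf0W, hf00⟩ : ∃ f ∈ W, f ≠ (0:ℂ[X]) := by
      by_contra hc
      push_neg at hc
      exact h ((Submodule.eq_bot_iff W).mpr hc)
    have hone : (1 : ℂ[X]) ∈ W := by
      have key : ∀ n : ℕ, ∀ f ∈ W, f ≠ (0:ℂ[X]) → f.natDegree ≤ n → (1:ℂ[X]) ∈ W := by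
        intro n
        induction n using Nat.strong_induction_on with
        | _ n IH =>
          intro f hfW hf0 hdeg
          by_cases h0 : f.natDegree = 0
          · obtain ⟨c, rfl⟩ := Polynomial.natDegree_eq_zero.mp h0
            have hc : c ≠ 0 := fun hh => hf0 (by rw [hh, map_zero])
            have hmem := W.smul_mem (algebraMap ℂ U c⁻¹) hfW
            rw [hCsmul] at hmem
            have : c⁻¹ • (C c : ℂ[X]) = 1 := by
              rw [Polynomial.smul_C, smul_eq_mul, inv_mul_cancel₀ hc, C_1]
            rwa [this] at hmem
          · have hgW : f - f.comp (X - C 1) ∈ W := by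
              have hb := W.smul_mem (ι ℂ b) hfW
              have h2 := W.smul_mem (algebraMap ℂ U lam⁻¹) hb
              rw [hCsmul, hbact, smul_smul, inv_mul_cancel₀ hlam, one_smul] at h2
              exact W.sub_mem hfW h2
            exact IH (f - f.comp (X - C 1)).natDegree
              (lt_of_lt_of_le (whit_aux_deg_lt f h0) hdeg)
              _ hgW (whit_aux_comp_ne f h0) le_rfl
      exact key f0.natDegree f0 hf0W hf00 le_rfl
    rw [eq_top_iff]
    intro p _
    have := W.smul_mem (aeval (ι ℂ a) p : U) hone
    rwa [haact, mul_one] at this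
  -- decomposition U = ℂ[a] + I
  set t : U := ι ℂ b - algebraMap ℂ U lam with htdef
  set I : Ideal U := Ideal.span {t} with hIdef
  have htI : t ∈ I := Ideal.subset_span rfl
  have hmulT : ∀ u : U, u * t ∈ I := fun u => by
    simpa [smul_eq_mul] using I.smul_mem u htI
  have hmulI : ∀ (u : U) {w : U}, w ∈ I → u * w ∈ I := fun u w hw => by
    simpa [smul_eq_mul] using I.smul_mem u hw
  have hmem2 : ∀ x : g, ∃ c d : ℂ, c • a + d • b = x := fun x =>
    Submodule.mem_span_pair.mp (hspan ▸ Submodule.mem_top)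
  have hDadd : ∀ s s' : U, (∃ p : ℂ[X], ∃ w ∈ I, s = aeval (ι ℂ a) p + w) →
      (∃ p : ℂ[X], ∃ w ∈ I, s' = aeval (ι ℂ a) p + w) →
      (∃ p : ℂ[X], ∃ w ∈ I, s + s' = aeval (ι ℂ a) p + w) := by
    rintro s s' ⟨p, w, hw, rfl⟩ ⟨p', w', hw', rfl⟩
    refine ⟨p + p', w + w', I.add_mem hw hw', by rw [map_add]; abel⟩
  have hDalg : ∀ (r : ℂ) (s : U), (∃ p : ℂ[X], ∃ w ∈ I, s = aeval (ι ℂ a) p + w) →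
      (∃ p : ℂ[X], ∃ w ∈ I, algebraMap ℂ U r * s = aeval (ι ℂ a) p + w) := by
    rintro r s ⟨p, w, hw, rfl⟩
    refine ⟨C r * p, algebraMap ℂ U r * w, hmulI _ hw, ?_⟩
    rw [mul_add, map_mul, aeval_C]
  have hDa : ∀ s : U, (∃ p : ℂ[X], ∃ w ∈ I, s = aeval (ι ℂ a) p + w) →
      (∃ p : ℂ[X], ∃ w ∈ I, ι ℂ a * s = aeval (ι ℂ a) p + w) := by
    rintro s ⟨p, w, hw, rfl⟩
    refine ⟨X * p, ι ℂ a * w, hmulI _ hw, ?_⟩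
    rw [mul_add, map_mul, aeval_X]
  have hDb : ∀ s : U, (∃ p : ℂ[X], ∃ w ∈ I, s = aeval (ι ℂ a) p + w) →
      (∃ p : ℂ[X], ∃ w ∈ I, ι ℂ b * s = aeval (ι ℂ a) p + w) := by
    rintro s ⟨p, w, hw, rfl⟩
    refine ⟨C lam * p.comp (X - C 1),
      aeval (ι ℂ a) (p.comp (X - C 1)) * t + ι ℂ b * w,
      I.add_mem (hmulT _) (hmulI _ hw), ?_⟩
    rw [mul_add, whit_b_poly_comm a b hab p]
    have hb' : (ι ℂ b : U) = t + algebraMap ℂ U lam := by rw [htdef, sub_add_cancel]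
    rw [map_mul, aeval_C]
    calc aeval (ι ℂ a) (p.comp (X - C 1)) * ι ℂ b + ι ℂ b * w
        = aeval (ι ℂ a) (p.comp (X - C 1)) * (t + algebraMap ℂ U lam) + ι ℂ b * w := by
          rw [← hb']
      _ = algebraMap ℂ U lam * aeval (ι ℂ a) (p.comp (X - C 1)) +
          (aeval (ι ℂ a) (p.comp (X - C 1)) * t + ι ℂ b * w) := by
          rw [mul_add, Algebra.commutes]; abel
  have hDsmul : ∀ (c : ℂ) (s : U), (∃ p : ℂ[X], ∃ w ∈ I, s = aeval (ι ℂ a) p + w) →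
      (∃ p : ℂ[X], ∃ w ∈ I, c • s = aeval (ι ℂ a) p + w) := by
    intro c s hs
    rw [Algebra.smul_def]
    exact hDalg c s hs
  have hclaim : ∀ u s : U, (∃ p : ℂ[X], ∃ w ∈ I, s = aeval (ι ℂ a) p + w) →
      (∃ p : ℂ[X], ∃ w ∈ I, u * s = aeval (ι ℂ a) p + w) := by
    intro u
    induction u using whit_ue_induction with
    | halg r => exact hDalg r
    | hι x =>
      intro s hs
      obtain ⟨c, d, hx⟩ := hmem2 x
      rw [← hx, map_add, map_smul, map_smul, add_mul,
        smul_mul_assoc, smul_mul_assoc]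
      exact hDadd _ _ (hDsmul c _ (hDa s hs)) (hDsmul d _ (hDb s hs))
    | hmul u v hu hv =>
      intro s hs
      rw [mul_assoc]
      exact hu _ (hv s hs)
    | hadd u v hu hv =>
      intro s hs
      rw [add_mul]
      exact hDadd _ _ (hu s hs) (hv s hs)
  have hdecomp : ∀ u : U, ∃ p : ℂ[X], ∃ w ∈ I, u = aeval (ι ℂ a) p + w := by
    intro u
    have := hclaim u 1 ⟨1, 0, I.zero_mem, by simp⟩
    rwa [mul_one] at this
  -- the evaluation map
  let e : U →ₗ[U] ℂ[X] :=
    { toFun := fun u => ρ u 1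
      map_add' := fun u v => by simp only [map_add, LinearMap.add_apply]
      map_smul' := fun u v => by
        show ρ (u * v) 1 = ρ u (ρ v 1)
        rw [map_mul]
        rfl }
  have het : e t = 0 := by
    show ρ t 1 = 0
    rw [htdef, map_sub, LinearMap.sub_apply, hρb, AlgHom.commutes,
      Module.algebraMap_end_apply, hBopapp]
    simp
  have hIk : I ≤ LinearMap.ker e := by
    rw [hIdef, Ideal.span_le]
    intro x hx
    rw [Set.mem_singleton_iff] at hx
    subst hx
    exact LinearMap.mem_ker.mpr het
  let ψ : (U ⧸ I) →ₗ[U] ℂ[X] := Submodule.liftQ I e hIk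
  have hψmk : ∀ u : U, ψ (Submodule.Quotient.mk u) = ρ u 1 := fun u => rfl
  have hψa : ∀ p : ℂ[X], ψ (Submodule.Quotient.mk (aeval (ι ℂ a) p : U)) = p := by
    intro p
    rw [hψmk, ← hsmul, haact, mul_one]
  have hsurj : Function.Surjective ψ := fun p => ⟨Submodule.Quotient.mk _, hψa p⟩
  have hinj : Function.Injective ψ := by
    rw [injective_iff_map_eq_zero]
    intro m hm
    obtain ⟨u, rfl⟩ := Submodule.Quotient.mk_surjective I m
    obtain ⟨p, w, hw, rfl⟩ := hdecomp u
    have hmk : (Submodule.Quotient.mk (aeval (ι ℂ a) p + w) : U ⧸ I)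
        = Submodule.Quotient.mk (aeval (ι ℂ a) p : U) := by
      rw [Submodule.Quotient.eq]
      simpa using hw
    rw [hmk] at hm ⊢
    rw [hψa] at hm
    rw [hm, map_zero]
    exact Submodule.Quotient.mk_eq_zero I |>.mpr I.zero_mem
  exact IsSimpleModule.congr (LinearEquiv.ofBijective ψ ⟨hinj, hsurj⟩)
end
end
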